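/- Fix c ∈ [−1,1] and ω ∈ ℝ. Then, as h → 0⁺, h² · Q̂₂(hω; h) converges to −32(2 − c)/3; i.e. the spurious symbol satisfies Q̂₂(hω; h) = −32(2−c)/(3h²) + O(1). -/

import Mathlib

open Filter Topology

/-- `Ω(θ) = −cos(θ/2)(16 − (7 + cos θ)c)`. -/
noncomputable def Om (c θ : ℝ) : ℝ :=
  -Real.cos (θ/2) * (16 - (7 + Real.cos θ)*c)

/-- `Δ(θ) = √(Ω(θ)² + 4c² sin⁶(θ/2))`. -/
noncomputable def Del (c θ : ℝ) : ℝ :=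
  Real.sqrt ((Om c θ)^2 + 4*c^2*(Real.sin (θ/2))^6)

/-- The principal symbol `Q̂₁(θ; h)`. -/
noncomputable def Qhat1 (c h θ : ℝ) : ℝ :=
  (2/(3*h^2)) * (-(15 + Real.cos θ) + (5 + 3*Real.cos θ)*c + Del c θ)

/-- The spurious symbol `Q̂₂(θ; h)`. -/
noncomputable def Qhat2 (c h θ : ℝ) : ℝ :=
  (2/(3*h^2)) * (-(15 + Real.cos θ) + (5 + 3*Real.cos θ)*c - Del c θ)

/-- The spurious symbol satisfies `h² Q̂₂(hω; h) → −32(2 − c)/3` as `h → 0⁺`. -/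
theorem Qhat2_leading_order (c : ℝ) (hc : c ∈ Set.Icc (-1 : ℝ) 1) (ω : ℝ) :
    Tendsto (fun h : ℝ => h^2 * Qhat2 c h (h*ω)) (𝓝[>] 0)
      (𝓝 (-32*(2 - c)/3)) := by
  have h16 : (0:ℝ) ≤ 16 - 8*c := by nlinarith [hc.2]
  have hDel0 : Del c 0 = 16 - 8*c := by
    unfold Del Om
    simp only [Real.cos_zero, Real.sin_zero, zero_div]
    rw [show (-1 * (16 - (7 + 1)*c))^2 + 4*c^2*(0:ℝ)^6
        = (16 - 8*c)^2 by ring, Real.sqrt_sq h16]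
  have hDelc : Continuous (Del c) := by
    unfold Del Om
    continuity
  have hθ : Tendsto (fun h : ℝ => h*ω) (𝓝[>] 0) (𝓝 0) := by
    have := (show Continuous (fun h : ℝ => h*ω) from continuous_id.mul (continuous_const (y := ω))).tendsto (0:ℝ)
    simpa using this.mono_left nhdsWithin_le_nhds
  have hg : Tendsto (fun θ : ℝ => (2/3:ℝ) *
      (-(15 + Real.cos θ) + (5 + 3*Real.cos θ)*c - Del c θ)) (𝓝 0)
      (𝓝 (-32*(2 - c)/3)) := by
    have hcont : Continuous (fun θ : ℝ => (2/3:ℝ) *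
        (-(15 + Real.cos θ) + (5 + 3*Real.cos θ)*c - Del c θ)) := by
      continuity
    have := hcont.tendsto 0
    rw [show (2/3:ℝ) * (-(15 + Real.cos 0) + (5 + 3*Real.cos 0)*c - Del c 0)
        = -32*(2 - c)/3 by rw [hDel0]; simp [Real.cos_zero]; ring] at this
    exact this
  refine (hg.comp hθ).congr' ?_
  filter_upwards [self_mem_nhdsWithin] with h hh
  have hne : h ≠ 0 := ne_of_gt hh
  simp only [Function.comp, Qhat2]
  field_simp
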